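/- Let p(z) = p_N z^N + ... + p_0 be a Hurwitz stable real polynomial of even degree N with p_N ≥ 1 and p_0 ≥ 1. Then at least one coefficient of p is greater than or equal to 2^{N/2}/(N+1). -/

import Mathlib

open Polynomial

private lemma prod_le_prod_aux (R : Multiset ℂ) (f g : ℂ → ℝ)
    (h : ∀ r ∈ R, 0 ≤ f r ∧ f r ≤ g r) :
    0 ≤ (R.map f).prod ∧ (R.map f).prod ≤ (R.map g).prod := by
  induction R using Multiset.induction_on with
  | empty => simp
  | @cons a s ih =>
    have ha := h a (Multiset.mem_cons_self a s)
    obtain ⟨h1, h2⟩ := ih (fun r hr => h r (Multiset.mem_cons_of_mem hr))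
    simp only [Multiset.map_cons, Multiset.prod_cons]
    exact ⟨mul_nonneg ha.1 h1, mul_le_mul ha.2 h2 h1 (le_trans ha.1 ha.2)⟩

private lemma key_ineq (r : ℂ) (h : r.re < 0) :
    2 * ‖r‖ ≤ (‖1 - r‖) ^ 2 := by
  have h1 : (‖1 - r‖) ^ 2 = 1 - 2 * r.re + (r.re ^ 2 + r.im ^ 2) := by
    rw [Complex.sq_norm, Complex.normSq_apply]
    simp [Complex.sub_re, Complex.sub_im]
    ring
  have h2 : (‖r‖) ^ 2 = r.re ^ 2 + r.im ^ 2 := by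
    rw [Complex.sq_norm, Complex.normSq_apply]; ring
  nlinarith [norm_nonneg r, sq_nonneg (‖r‖ - 1)]

theorem max_coeff_lower_bound (N : ℕ) (hNe : Even N) (p : ℝ[X])
    (hdeg : p.natDegree = N) (hlead : 1 ≤ p.leadingCoeff) (hconst : 1 ≤ p.coeff 0)
    (hstab : ∀ z : ℂ, (p.map (algebraMap ℝ ℂ)).IsRoot z → z.re < 0) :
    ∃ i ≤ N, (2 : ℝ) ^ (N / 2) / (N + 1) ≤ p.coeff i := by
  set q := p.map (algebraMap ℝ ℂ) with hq
  set lc := p.leadingCoeff with hlc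
  have hlc0 : (0 : ℝ) < lc := lt_of_lt_of_le one_pos hlead
  have hp0 : p ≠ 0 := fun h => by simp [hlc, h] at hlc0
  have hinj : Function.Injective (algebraMap ℝ ℂ) := (algebraMap ℝ ℂ).injective
  have hq0 : q ≠ 0 := (Polynomial.map_ne_zero_iff hinj).mpr hp0
  have hsplits : q.Splits := IsAlgClosed.splits q
  have hqdeg : q.natDegree = N := by
    rw [hq, Polynomial.natDegree_map_eq_of_injective hinj, hdeg]
  have hcard : q.roots.card = N := by
    rw [Polynomial.splits_iff_card_roots.mp hsplits, hqdeg]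
  have hroots_re : ∀ r ∈ q.roots, r.re < 0 := fun r hr =>
    hstab r ((Polynomial.mem_roots hq0).mp hr)
  have hqlc : q.leadingCoeff = (lc : ℂ) := by
    rw [hq, Polynomial.leadingCoeff_map_of_injective hinj]; rfl
  -- eval at 1 and 0
  have e1 : q.eval 1 = (lc : ℂ) * (q.roots.map fun a => 1 - a).prod := by
    rw [hsplits.eval_eq_prod_roots 1, hqlc]
  have e0 : q.eval 0 = (lc : ℂ) * (q.roots.map fun a => 0 - a).prod := by
    rw [hsplits.eval_eq_prod_roots 0, hqlc]
  have eq1 : q.eval 1 = ((p.eval 1 : ℝ) : ℂ) := by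
    rw [hq, Polynomial.eval_map, Polynomial.eval₂_at_one]; rfl
  have eq0 : q.eval 0 = ((p.coeff 0 : ℝ) : ℂ) := by
    rw [hq, Polynomial.eval_map, Polynomial.eval₂_at_zero]; rfl
  -- abs of products
  set P1 : ℝ := (q.roots.map fun a => ‖1 - a‖).prod with hP1
  set P0 : ℝ := (q.roots.map fun a => ‖a‖).prod with hP0
  have A1 : |p.eval 1| = lc * P1 := by
    have := congrArg (normHom : ℂ →*₀ ℝ) (e1.symm.trans eq1)
    rw [map_mul, map_multiset_prod, Multiset.map_map, Function.comp_def] at this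
    simp only [normHom_apply, Complex.norm_real, Real.norm_eq_abs, abs_of_pos hlc0] at this
    exact this.symm
  have A0 : p.coeff 0 = lc * P0 := by
    have := congrArg (normHom : ℂ →*₀ ℝ) (e0.symm.trans eq0)
    rw [map_mul, map_multiset_prod, Multiset.map_map, Function.comp_def] at this
    simp only [normHom_apply, Complex.norm_real, Real.norm_eq_abs, abs_of_pos hlc0] at this
    rw [abs_of_pos (lt_of_lt_of_le one_pos hconst)] at this
    simp only [zero_sub, norm_neg] at this
    exact this.symm
  -- product inequality
  obtain ⟨hnn, hprodle⟩ := prod_le_prod_aux q.roots (fun r => 2 * ‖r‖)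
    (fun r => (‖1 - r‖) ^ 2)
    (fun r hr => ⟨by positivity, key_ineq r (hroots_re r hr)⟩)
  have hL : (q.roots.map fun r => 2 * ‖r‖).prod = 2 ^ N * P0 := by
    rw [Multiset.prod_map_mul]
    congr 1
    rw [Multiset.map_const', Multiset.prod_replicate, hcard]
  have hR : (q.roots.map fun r => (‖1 - r‖) ^ 2).prod = P1 ^ 2 := by
    rw [hP1, ← Multiset.prod_map_pow]
  have hineq : 2 ^ N * P0 ≤ P1 ^ 2 := by rw [← hL, ← hR]; exact hprodle
  -- (p.eval 1)^2 ≥ 2^N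
  have hP0val : lc * P0 = p.coeff 0 := A0.symm
  have hsq : (2 : ℝ) ^ N ≤ (p.eval 1) ^ 2 := by
    have h1 : (p.eval 1) ^ 2 = lc ^ 2 * P1 ^ 2 := by
      rw [← sq_abs, A1]; ring
    have h2 : lc ^ 2 * (2 ^ N * P0) ≤ lc ^ 2 * P1 ^ 2 :=
      mul_le_mul_of_nonneg_left hineq (sq_nonneg lc)
    have h3 : lc ^ 2 * ((2:ℝ) ^ N * P0) = 2 ^ N * (lc * (lc * P0)) := by ring
    have h4 : (1 : ℝ) ≤ lc * (lc * P0) := by rw [hP0val]; nlinarith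
    nlinarith [pow_pos (show (0:ℝ) < 2 by norm_num) N]
  -- eval at 1 is nonneg
  have hpos : 0 ≤ p.eval 1 := by
    by_contra h
    push_neg at h
    have hcont : ContinuousOn (fun x : ℝ => p.eval x) (Set.Icc 0 1) :=
      (Polynomial.continuous p).continuousOn
    have h0 : (0 : ℝ) ∈ Set.Icc (p.eval 1) (p.eval 0) := by
      constructor
      · exact le_of_lt h
      · rw [← Polynomial.coeff_zero_eq_eval_zero]; linarith
    obtain ⟨x, hx, hfx⟩ := intermediate_value_Icc' (by norm_num : (0:ℝ) ≤ 1) hcont h0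
    have hroot : q.IsRoot (x : ℂ) := by
      rw [Polynomial.IsRoot, hq, Polynomial.eval_map]
      have hax : (algebraMap ℝ ℂ) x = (x : ℂ) := rfl
      have hx0 : p.eval x = 0 := hfx
      rw [← hax, Polynomial.eval₂_hom, hx0, map_zero]
    have := hstab x hroot
    simp at this
    linarith [hx.1]
  -- 2^(N/2) ≤ p.eval 1
  obtain ⟨m, hm⟩ := hNe
  have hNm : N / 2 = m := by omega
  have h2m : (2 : ℝ) ^ m * (2 : ℝ) ^ m = 2 ^ N := by
    rw [← pow_add, hm]
  have hev : (2 : ℝ) ^ (N / 2) ≤ p.eval 1 := by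
    rw [hNm]
    nlinarith [pow_pos (by norm_num : (0:ℝ) < 2) m, hsq, hpos]
  -- conclude by contradiction
  by_contra hcon
  push_neg at hcon
  have hsum : p.eval 1 = ∑ i ∈ Finset.range (N + 1), p.coeff i := by
    rw [Polynomial.eval_eq_sum_range, hdeg]
    simp
  have hlt : ∑ i ∈ Finset.range (N + 1), p.coeff i <
      ∑ _i ∈ Finset.range (N + 1), (2 : ℝ) ^ (N / 2) / (N + 1) := by
    apply Finset.sum_lt_sum_of_nonempty (by simp)
    intro i hi
    exact hcon i (Nat.lt_succ_iff.mp (Finset.mem_range.mp hi))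
  rw [Finset.sum_const, Finset.card_range, nsmul_eq_mul] at hlt
  have hNne : ((N : ℝ) + 1) ≠ 0 := by positivity
  rw [show ((N + 1 : ℕ) : ℝ) = (N : ℝ) + 1 by push_cast; ring,
    mul_div_cancel₀ _ hNne] at hlt
  rw [← hsum] at hlt
  linarith
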